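/- Let G = (V,E) be a finite simple graph without isolated vertices and γ(F) = α(G[V⟨F⟩]) the independent set game characteristic function. Then γ is additive (i.e., γ(S) + γ(T) = γ(S ∩ T) + γ(S ∪ T) for all S, T ⊆ E) if and only if every non-pendant vertex of G is adjacent to a pendant vertex. -/

import Mathlib

/-- `closedVerts G F` is V⟨F⟩: the set of vertices of `G` all of whose incident
edges belong to `F`. -/
def closedVerts {V : Type*} (G : SimpleGraph V) (F : Set (Sym2 V)) : Set V :=
  {v | ∀ e ∈ G.edgeSet, v ∈ e → e ∈ F}

/-- `s` is an independent set of the induced subgraph `G[A]`. -/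
def IsIndepOn {V : Type*} (G : SimpleGraph V) (A : Set V) (s : Finset V) : Prop :=
  ↑s ⊆ A ∧ ∀ u ∈ s, ∀ v ∈ s, ¬ G.Adj u v

/-- `gamma G F = α(G[V⟨F⟩])`, the maximum size of an independent set of the
subgraph of `G` induced on `closedVerts G F`. -/
noncomputable def gamma {V : Type*} [Fintype V] (G : SimpleGraph V) (F : Set (Sym2 V)) : ℕ :=
  sSup {n | ∃ s : Finset V, IsIndepOn G (closedVerts G F) s ∧ s.card = n}

namespace Stmt7Aux

open SimpleGraph

variable {V : Type*} [Fintype V] {G : SimpleGraph V}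

lemma exists_adj_eq {e : Sym2 V} (he : e ∈ G.edgeSet) {v : V} (hv : v ∈ e) :
    ∃ w, G.Adj v w ∧ e = s(v, w) := by
  induction e with
  | _ a b =>
    rw [Sym2.mem_iff] at hv
    rw [SimpleGraph.mem_edgeSet] at he
    rcases hv with rfl | rfl
    · exact ⟨b, he, rfl⟩
    · exact ⟨a, he.symm, Sym2.eq_swap⟩

variable [DecidableRel G.Adj]

lemma eq_of_deg_one {v : V} (hd : G.degree v = 1) {e e' : Sym2 V}
    (he : e ∈ G.edgeSet) (hve : v ∈ e) (he' : e' ∈ G.edgeSet) (hve' : v ∈ e') : e = e' := by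
  classical
  have hcard : (G.incidenceFinset v).card ≤ 1 := by
    rw [card_incidenceFinset_eq_degree, hd]
  refine Finset.card_le_one.mp hcard e ?_ e' ?_
  · rw [mem_incidenceFinset]; exact ⟨he, hve⟩
  · rw [mem_incidenceFinset]; exact ⟨he', hve'⟩

/-- The set of pendant edges. -/
def PE (G : SimpleGraph V) [DecidableRel G.Adj] : Set (Sym2 V) :=
  {e | e ∈ G.edgeSet ∧ ∃ w ∈ e, G.degree w = 1}

lemma gamma_nonempty (F : Set (Sym2 V)) :
    (0 : ℕ) ∈ {n | ∃ s : Finset V, IsIndepOn G (closedVerts G F) s ∧ s.card = n} :=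
  ⟨∅, ⟨by simp, by simp⟩, rfl⟩

lemma gamma_le {F : Set (Sym2 V)} {m : ℕ}
    (h : ∀ s : Finset V, IsIndepOn G (closedVerts G F) s → s.card ≤ m) : gamma G F ≤ m :=
  csSup_le ⟨0, gamma_nonempty F⟩ (by rintro n ⟨s, hs, rfl⟩; exact h s hs)

lemma le_gamma {F : Set (Sym2 V)} {s : Finset V} (h : IsIndepOn G (closedVerts G F) s) :
    s.card ≤ gamma G F :=
  le_csSup ⟨Fintype.card V, by rintro n ⟨s, _, rfl⟩; simpa [Finset.card_univ] using s.card_le_univ⟩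
    ⟨s, h, rfl⟩

open Classical in
noncomputable def pend (G : SimpleGraph V) [DecidableRel G.Adj] (e : Sym2 V) : V :=
  if h : ∃ w ∈ e, G.degree w = 1 then h.choose else (Quot.out e).1

open Classical in
lemma pend_spec {e : Sym2 V} (h : e ∈ PE G) : pend G e ∈ e ∧ G.degree (pend G e) = 1 := by
  rw [pend, dif_pos h.2]
  exact ⟨h.2.choose_spec.1, h.2.choose_spec.2⟩

lemma pendant_closed {F : Set (Sym2 V)} {e : Sym2 V} (heF : e ∈ F) (he : e ∈ G.edgeSet)
    {p : V} (hpe : p ∈ e) (hd : G.degree p = 1) : p ∈ closedVerts G F := by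
  intro e' he' hpe'
  exact (eq_of_deg_one hd he' hpe' he hpe) ▸ heF

open Classical in
noncomputable def pfin (G : SimpleGraph V) [DecidableRel G.Adj] (F : Set (Sym2 V)) : Finset V :=
  (Set.toFinite (F ∩ PE G)).toFinset.image (pend G)

lemma pfin_indep {F : Set (Sym2 V)} : IsIndepOn G (closedVerts G F) (pfin G F) := by
  constructor
  · intro v hv
    simp only [pfin, Finset.coe_image, Set.mem_image, Set.Finite.coe_toFinset] at hv
    obtain ⟨e, ⟨heF, hePE⟩, rfl⟩ := hv
    obtain ⟨hpe, hd⟩ := pend_spec hePE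
    exact pendant_closed heF hePE.1 hpe hd
  · intro u hu v hv hadj
    simp only [pfin, Finset.mem_image, Set.Finite.mem_toFinset, Set.mem_inter_iff] at hu hv
    obtain ⟨e, ⟨heF, hePE⟩, rfl⟩ := hu
    obtain ⟨e', ⟨heF', hePE'⟩, rfl⟩ := hv
    obtain ⟨hpe, hd⟩ := pend_spec hePE
    obtain ⟨hpe', hd'⟩ := pend_spec hePE'
    have h1 : s(pend G e, pend G e') ∈ G.edgeSet := hadj
    have he1 : s(pend G e, pend G e') = e :=
      eq_of_deg_one hd h1 (Sym2.mem_mk_left _ _) hePE.1 hpe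
    have he2 : s(pend G e, pend G e') = e' :=
      eq_of_deg_one hd' h1 (Sym2.mem_mk_right _ _) hePE'.1 hpe'
    rw [he1.symm.trans he2] at hadj
    exact G.loopless.irrefl _ hadj

lemma pfin_card (F : Set (Sym2 V)) :
    (pfin G F).card = (Set.toFinite (F ∩ PE G)).toFinset.card := by
  classical
  rw [pfin]
  apply Finset.card_image_of_injOn
  intro e he e' he' hpe
  simp only [Finset.mem_coe, Set.Finite.mem_toFinset] at he he'
  obtain ⟨h1, h2⟩ := pend_spec he.2
  obtain ⟨h1', h2'⟩ := pend_spec he'.2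
  exact eq_of_deg_one h2 he.2.1 h1 he'.2.1 (hpe ▸ h1')

lemma mem_pend_of_mem_pfin {F : Set (Sym2 V)} {x : V} (hx : x ∈ pfin G F) :
    G.degree x = 1 := by
  simp only [pfin, Finset.mem_image, Set.Finite.mem_toFinset] at hx
  obtain ⟨e, he, rfl⟩ := hx
  exact (pend_spec he.2).2

lemma card_le_of_indep {F : Set (Sym2 V)} (hiso : ∀ v : V, ∃ u, G.Adj v u)
    (H : ∀ v : V, G.degree v ≠ 1 → ∃ w : V, G.Adj v w ∧ G.degree w = 1)
    {s : Finset V} (hs : IsIndepOn G (closedVerts G F) s) :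
    s.card ≤ (Set.toFinite (F ∩ PE G)).toFinset.card := by
  classical
  have hex : ∀ v : V, ∃ e : Sym2 V, v ∈ s → e ∈ F ∩ PE G ∧ v ∈ e := by
    intro v
    by_cases hv : v ∈ s
    · have hvc : v ∈ closedVerts G F := hs.1 hv
      by_cases hd : G.degree v = 1
      · obtain ⟨u, hu⟩ := hiso v
        have he : s(v, u) ∈ G.edgeSet := hu
        exact ⟨s(v, u), fun _ => ⟨⟨hvc _ he (Sym2.mem_mk_left _ _),
          he, v, Sym2.mem_mk_left _ _, hd⟩, Sym2.mem_mk_left _ _⟩⟩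
      · obtain ⟨w, hw, hwd⟩ := H v hd
        have he : s(v, w) ∈ G.edgeSet := hw
        exact ⟨s(v, w), fun _ => ⟨⟨hvc _ he (Sym2.mem_mk_left _ _),
          he, w, Sym2.mem_mk_right _ _, hwd⟩, Sym2.mem_mk_left _ _⟩⟩
    · exact ⟨s(v, v), fun h => absurd h hv⟩
  choose f hf using hex
  apply Finset.card_le_card_of_injOn f
  · intro v hv
    rw [Finset.mem_coe, Set.Finite.mem_toFinset]
    exact (hf v hv).1
  · intro u hu v hv hfe
    rw [Finset.mem_coe] at hu hv
    by_contra hne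
    have huf : u ∈ f u := (hf u hu).2
    have hvf : v ∈ f u := hfe ▸ (hf v hv).2
    have heE : f u ∈ G.edgeSet := (hf u hu).1.2.1
    have : f u = s(u, v) := (Sym2.mem_and_mem_iff hne).mp ⟨huf, hvf⟩
    rw [this, SimpleGraph.mem_edgeSet] at heE
    exact hs.2 u hu v hv heE

lemma gamma_eq {F : Set (Sym2 V)} (hiso : ∀ v : V, ∃ u, G.Adj v u)
    (H : ∀ v : V, G.degree v ≠ 1 → ∃ w : V, G.Adj v w ∧ G.degree w = 1) :
    gamma G F = (Set.toFinite (F ∩ PE G)).toFinset.card :=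
  le_antisymm (gamma_le (G := G) fun _ hs => card_le_of_indep hiso H hs)
    ((pfin_card (G := G) F) ▸ le_gamma (G := G) (pfin_indep (G := G) (F := F)))

end Stmt7Aux

open Stmt7Aux SimpleGraph in
theorem stmt7 {V : Type*} [Fintype V] (G : SimpleGraph V) [DecidableRel G.Adj]
    (hiso : ∀ v : V, ∃ u, G.Adj v u) :
    (∀ S T : Set (Sym2 V), S ⊆ G.edgeSet → T ⊆ G.edgeSet →
        gamma G S + gamma G T = gamma G (S ∩ T) + gamma G (S ∪ T)) ↔
      (∀ v : V, G.degree v ≠ 1 → ∃ w : V, G.Adj v w ∧ G.degree w = 1) := by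
  classical
  constructor
  · -- additivity implies the pendant-neighbor condition
    intro hadd v hdv
    by_contra hno
    push_neg at hno
    -- gamma of the empty set is 0
    have h0 : gamma G (∅ : Set (Sym2 V)) = 0 := by
      refine Nat.le_zero.mp (gamma_le ?_)
      intro s hs
      have : s = ∅ := by
        apply Finset.eq_empty_of_forall_notMem
        intro x hx
        obtain ⟨u, hu⟩ := hiso x
        exact (hs.1 hx) s(x, u) hu (Sym2.mem_mk_left _ _)
      simp [this]
    -- for a single edge, gamma is at most the indicator of being a pendant edge
    have hsingle : ∀ e ∈ G.edgeSet, gamma G {e} ≤ (if e ∈ PE G then 1 else 0) := by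
      intro e heE
      have hmem : ∀ x ∈ closedVerts G ({e} : Set (Sym2 V)), x ∈ e ∧ G.degree x = 1 := by
        intro x hx
        obtain ⟨u, hu⟩ := hiso x
        have h1 : s(x, u) ∈ ({e} : Set (Sym2 V)) := hx s(x, u) hu (Sym2.mem_mk_left _ _)
        rw [Set.mem_singleton_iff] at h1
        have hxe : x ∈ e := h1 ▸ Sym2.mem_mk_left x u
        refine ⟨hxe, ?_⟩
        rw [← card_incidenceFinset_eq_degree]
        have : G.incidenceFinset x = {e} := by
          apply Finset.eq_singleton_iff_unique_mem.mpr
          constructor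
          · rw [mem_incidenceFinset]; exact ⟨heE, hxe⟩
          · intro e' he'
            rw [mem_incidenceFinset] at he'
            have := hx e' he'.1 he'.2
            rwa [Set.mem_singleton_iff] at this
        rw [this, Finset.card_singleton]
      split_ifs with hPE
      · refine gamma_le ?_
        intro s hs
        rw [Finset.card_le_one]
        intro a ha b hb
        by_contra hne
        have hae := (hmem a (hs.1 ha)).1
        have hbe := (hmem b (hs.1 hb)).1
        have : e = s(a, b) := (Sym2.mem_and_mem_iff hne).mp ⟨hae, hbe⟩
        rw [this, SimpleGraph.mem_edgeSet] at heE
        exact hs.2 a ha b hb heE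
      · refine Nat.le_zero.mp (gamma_le ?_) |>.le
        intro s hs
        have : s = ∅ := by
          apply Finset.eq_empty_of_forall_notMem
          intro x hx
          obtain ⟨hxe, hxd⟩ := hmem x (hs.1 hx)
          exact hPE ⟨heE, x, hxe, hxd⟩
        simp [this]
    -- gamma is additive over finite unions of singletons
    have hsum : ∀ A : Finset (Sym2 V), ↑A ⊆ G.edgeSet →
        gamma G ↑A = ∑ e ∈ A, gamma G {e} := by
      intro A
      induction A using Finset.induction with
      | empty => intro _; simpa using h0
      | @insert e A heA ih =>
        intro hsub
        have hA : (↑A : Set (Sym2 V)) ⊆ G.edgeSet := by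
          refine Set.Subset.trans ?_ hsub
          intro x hx; simp only [Finset.coe_insert, Set.mem_insert_iff]; exact Or.inr hx
        have heE : e ∈ G.edgeSet := hsub (by simp)
        have key := hadd (↑A) {e} hA (by simpa using heE)
        have hint : (↑A ∩ {e} : Set (Sym2 V)) = ∅ := by
          ext x
          simp only [Set.mem_inter_iff, Set.mem_singleton_iff, Set.mem_empty_iff_false,
            iff_false, not_and, Finset.mem_coe]
          rintro hx rfl; exact heA hx
        have huni : (↑A ∪ {e} : Set (Sym2 V)) = ↑(insert e A) := by
          ext x
          simp only [Set.mem_union, Set.mem_singleton_iff, Finset.coe_insert,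
            Set.mem_insert_iff, Finset.mem_coe]
          tauto
        rw [hint, huni, h0, ih hA, zero_add] at key
        rw [Finset.sum_insert heA, ← key]
        ring
    -- the upper bound: gamma of the full edge set is at most the number of pendant edges
    set Efin : Finset (Sym2 V) := (Set.toFinite G.edgeSet).toFinset with hEfin
    have hEco : (↑Efin : Set (Sym2 V)) = G.edgeSet := Set.Finite.coe_toFinset _
    have hup : gamma G G.edgeSet ≤ (Set.toFinite (G.edgeSet ∩ PE G)).toFinset.card := by
      have h1 : gamma G G.edgeSet = ∑ e ∈ Efin, gamma G {e} := by
        have h := hsum Efin (by rw [hEco])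
        rwa [hEco] at h
      have h2 : ∑ e ∈ Efin, gamma G {e} ≤ ∑ e ∈ Efin, (if e ∈ PE G then 1 else 0) := by
        apply Finset.sum_le_sum
        intro e he
        exact hsingle e (by rw [← hEco]; exact_mod_cast he)
      have h3 : ∑ e ∈ Efin, (if e ∈ PE G then 1 else 0) =
          (Set.toFinite (G.edgeSet ∩ PE G)).toFinset.card := by
        rw [← Finset.card_filter]
        congr 1
        ext x
        simp only [Finset.mem_filter, Set.Finite.mem_toFinset, Set.mem_inter_iff, hEfin]
      omega
    -- the lower bound: an independent set of size (number of pendant edges) + 1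
    have hvlo : (Set.toFinite (G.edgeSet ∩ PE G)).toFinset.card + 1 ≤ gamma G G.edgeSet := by
      have hvnot : v ∉ pfin G G.edgeSet := fun h => hdv (mem_pend_of_mem_pfin h)
      have hcard : (insert v (pfin G G.edgeSet)).card =
          (Set.toFinite (G.edgeSet ∩ PE G)).toFinset.card + 1 := by
        rw [Finset.card_insert_of_notMem hvnot, pfin_card]
      rw [← hcard]
      apply le_gamma
      constructor
      · intro x _ e he _; exact he
      · intro a ha b hb hadj
        rw [Finset.mem_insert] at ha hb
        have hdeg : ∀ x ∈ pfin G G.edgeSet, ¬ G.Adj v x := by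
          intro x hx hax
          exact hno x hax (mem_pend_of_mem_pfin hx)
        rcases ha with rfl | ha <;> rcases hb with rfl | hb
        · exact G.loopless.irrefl _ hadj
        · exact hdeg b hb hadj
        · exact hdeg a ha hadj.symm
        · exact (pfin_indep (G := G) (F := G.edgeSet)).2 a ha b hb hadj
    omega
  · -- the pendant-neighbor condition implies additivity
    intro H S T hS hT
    rw [gamma_eq hiso H, gamma_eq hiso H, gamma_eq hiso H, gamma_eq hiso H]
    have hi : (Set.toFinite ((S ∩ T) ∩ PE G)).toFinset =
        (Set.toFinite (S ∩ PE G)).toFinset ∩ (Set.toFinite (T ∩ PE G)).toFinset := by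
      ext x
      simp only [Set.Finite.mem_toFinset, Finset.mem_inter, Set.mem_inter_iff]
      tauto
    have hu : (Set.toFinite ((S ∪ T) ∩ PE G)).toFinset =
        (Set.toFinite (S ∩ PE G)).toFinset ∪ (Set.toFinite (T ∩ PE G)).toFinset := by
      ext x
      simp only [Set.Finite.mem_toFinset, Finset.mem_union, Set.mem_inter_iff, Set.mem_union]
      tauto
    rw [hi, hu]
    exact (Finset.card_inter_add_card_union _ _).symm
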